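/- The point P₁ = (1, 13) lies on the elliptic curve E : y² = x³ + 6(27 + 1) = x³ + 168 over ℚ (the fiber of the elliptic surface attached to y² = x³ + 6(27 z⁶ + w⁶) above (z:w) = (1:1)), and P₁ is a point of infinite order on E(ℚ). -/

import Mathlib

open WeierstrassCurve.Affine

private lemma num_int (x : ℚ) {c3 c1 c0 : ℤ} 
    (h : x ^ 4 = c3 * x ^ 3 + c1 * x + c0) :
    x.num ^ 4 = c3 * x.num ^ 3 * x.den + c1 * x.num * (x.den : ℤ) ^ 3 + c0 * (x.den : ℤ) ^ 4 := by
  have hden : (x.den : ℚ) ≠ 0 := by exact_mod_cast x.den_ne_zero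
  have hx' : (x.num : ℚ) = x * x.den := by
    rw [eq_comm]; exact Rat.mul_den_eq_num x
  have key : (x.num : ℚ) ^ 4 = c3 * x.num ^ 3 * x.den + c1 * x.num * (x.den : ℚ) ^ 3
      + c0 * (x.den : ℚ) ^ 4 := by
    rw [hx']
    linear_combination ((x.den : ℚ)) ^ 4 * h
  exact_mod_cast key

private lemma no_cube (x : ℚ) (h : x ^ 3 = -168) : False := by
  have h4 : x ^ 4 = 0 * x ^ 3 + (-168 : ℤ) * x + 0 := by
    push_cast
    linear_combination x * h
  have h' := num_int x h4
  simp only [zero_mul, add_zero, zero_add, mul_zero] at h'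
  -- x.num ^ 4 = -168 * x.num * x.den ^ 3
  have hdvd : (x.den : ℤ) ∣ x.num ^ 4 :=
    ⟨-168 * x.num * (x.den : ℤ) ^ 2, by push_cast at h' ⊢; linear_combination h'⟩
  have hdvd' : x.den ∣ x.num.natAbs ^ 4 := by
    have := Int.natAbs_dvd_natAbs.mpr hdvd
    simpa [Int.natAbs_pow] using this
  have hcop : Nat.Coprime (x.num.natAbs ^ 4) x.den := Nat.Coprime.pow_left 4 x.reduced
  have hden1 : x.den = 1 := Nat.Coprime.eq_one_of_dvd hcop.symm hdvd'
  have hxint : x = (x.num : ℚ) := by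
    conv_lhs => rw [← Rat.num_div_den x]
    rw [hden1]; simp
  rw [hxint] at h
  have hz : (x.num : ℤ) ^ 3 = -168 := by exact_mod_cast h
  have hz9 : ((x.num : ZMod 9)) ^ 3 = -168 := by
    have := congrArg (Int.cast : ℤ → ZMod 9) hz
    push_cast at this
    simpa using this
  have : ∀ t : ZMod 9, t ^ 3 ≠ -168 := by decide
  exact this _ hz9

private lemma no_quartic (x : ℚ) (h : x ^ 4 = 4 * x ^ 3 + 1344 * x + 672) : False := by
  have h4 : x ^ 4 = (4 : ℤ) * x ^ 3 + (1344 : ℤ) * x + (672 : ℤ) := by push_cast; linarith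
  have h' := num_int x h4
  have hdvd : (x.den : ℤ) ∣ x.num ^ 4 :=
    ⟨4 * x.num ^ 3 + 1344 * x.num * (x.den : ℤ) ^ 2 + 672 * (x.den : ℤ) ^ 3, by
      linear_combination h'⟩
  have hdvd' : x.den ∣ x.num.natAbs ^ 4 := by
    have := Int.natAbs_dvd_natAbs.mpr hdvd
    simpa [Int.natAbs_pow] using this
  have hcop : Nat.Coprime (x.num.natAbs ^ 4) x.den := Nat.Coprime.pow_left 4 x.reduced
  have hden1 : x.den = 1 := Nat.Coprime.eq_one_of_dvd hcop.symm hdvd'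
  rw [hden1] at h'
  push_cast at h'
  -- h' : x.num ^ 4 = 4 * x.num ^ 3 + 1344 * x.num + 672
  have hz : ((x.num : ZMod 64)) ^ 4 = 4 * (x.num : ZMod 64) ^ 3 + 1344 * (x.num : ZMod 64) + 672 := by
    have := congrArg (Int.cast : ℤ → ZMod 64) h'
    push_cast at this
    simpa using this
  have : ∀ t : ZMod 64, t ^ 4 ≠ 4 * t ^ 3 + 1344 * t + 672 := by decide
  exact this _ hz

private def W8 : WeierstrassCurve.Affine ℚ := { a₁ := 0, a₂ := 0, a₃ := 0, a₄ := 0, a₆ := 168 }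

private lemma stmt8_aux :
    ∃ h : W8.Nonsingular 1 13,
      ∀ n : ℕ, n ≠ 0 → n • (WeierstrassCurve.Affine.Point.some _ _ h) ≠ 0 := by
  have hns : W8.Nonsingular 1 13 := by
    rw [nonsingular_iff, equation_iff]
    constructor
    · norm_num [W8]
    · right
      norm_num [negY, W8]
  refine ⟨hns, ?_⟩
  intro n hn hP0
  set P : W8.Point := Point.some _ _ hns with hPdef
  -- no 2-torsion
  have h2tor : ∀ T : W8.Point, T + T = 0 → T = 0 := by
    rintro (_ | @⟨x, y, hT⟩) hTT
    · rfl
    · exfalso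
      by_cases hy : y = W8.negY x y
      · have hy0 : y = 0 := by
          have : y = -y := by simpa [negY, W8] using hy
          linarith
        have heq := ((nonsingular_iff _ _).mp hT).1
        rw [equation_iff] at heq
        simp [W8, hy0] at heq
        exact no_cube x (by linarith)
      · rw [Point.add_self_of_Y_ne hy] at hTT
        exact Point.some_ne_zero _ hTT
  -- no halving of P
  have hhalf : ∀ Q : W8.Point, Q + Q ≠ P := by
    rintro (_ | @⟨x, y, hQ⟩) hQQ
    · rw [hPdef] at hQQ
      rw [← Point.zero_def, add_zero] at hQQ
      exact Point.some_ne_zero hns hQQ.symm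
    · by_cases hy : y = W8.negY x y
      · rw [Point.add_self_of_Y_eq hy] at hQQ
        exact Point.some_ne_zero hns (by simpa [hPdef] using hQQ.symm)
      · rw [Point.add_self_of_Y_ne hy] at hQQ
        rw [hPdef] at hQQ
        injection hQQ with hx1 hy1
        -- hx1 : W8.addX x x (W8.slope x x y y) = 1
        have hy0 : y ≠ 0 := by
          intro h0
          exact hy (by simp [negY, W8, h0])
        have hsl : W8.slope x x y y = 3 * x ^ 2 / (2 * y) := by
          rw [slope_of_Y_ne rfl hy]
          simp only [negY, W8]
          ring_nf
        rw [addX, hsl] at hx1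
        simp only [W8] at hx1
        have heq := ((nonsingular_iff _ _).mp hQ).1
        rw [equation_iff] at heq
        simp only [W8] at heq
        -- heq : y^2 + 0 = x^3 + ...
        have heq' : y ^ 2 = x ^ 3 + 168 := by linarith [heq]
        have hx4 : x ^ 4 = 4 * x ^ 3 + 1344 * x + 672 := by
          have h2y : (2 * y) ≠ 0 := by simpa using hy0
          field_simp at hx1
          linear_combination hx1 + (8 * x + 4) * heq'
        exact no_quartic x hx4
  have hfin : IsOfFinAddOrder P :=
    isOfFinAddOrder_iff_nsmul_eq_zero.mpr ⟨n, Nat.pos_of_ne_zero hn, hP0⟩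
  set m := addOrderOf P with hm
  have hmpos : 0 < m := hfin.addOrderOf_pos
  have hmP : m • P = 0 := addOrderOf_nsmul_eq_zero P
  rcases Nat.even_or_odd m with ⟨k, hk⟩ | ⟨k, hk⟩
  · -- even order gives 2-torsion
    have hk0 : 0 < k := by omega
    have hkm : k < m := by omega
    have hTT : k • P + k • P = 0 := by rw [← add_nsmul, ← hk]; exact hmP
    have hT0 := h2tor _ hTT
    have hdvd : m ∣ k := addOrderOf_dvd_of_nsmul_eq_zero hT0
    exact absurd (Nat.le_of_dvd hk0 hdvd) (by omega)
  · -- odd order: P is divisible by 2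
    apply hhalf ((k + 1) • P)
    rw [← add_nsmul]
    have hkk : k + 1 + (k + 1) = m + 1 := by omega
    rw [hkk, add_nsmul, hmP, zero_add, one_nsmul]

/-- the point `P₁ = (1, 13)` lies on the elliptic curve `y² = x³ + 168` over
`ℚ` (the fiber above `(1:1)` of the surface `y² = x³ + 6(27z⁶ + w⁶)`) and has infinite
order in the Mordell–Weil group. -/
theorem stmt8 :
    letI W : WeierstrassCurve.Affine ℚ := { a₁ := 0, a₂ := 0, a₃ := 0, a₄ := 0, a₆ := 168 }
    ∃ h : W.Nonsingular 1 13,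
      ∀ n : ℕ, n ≠ 0 → n • (WeierstrassCurve.Affine.Point.some _ _ h) ≠ 0 := by
  exact stmt8_aux
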